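/- Let q be a power of a prime, let F be the finite field with q² elements, let 2 ≤ d ≤ q and 0 ≤ j ≤ d−1. Then the number of codewords z of weight exactly d+1 of the Hermitian code H^j_d (corner code if j = 0, edge code if 1 ≤ j ≤ d−1) such that all points of the support of z have the same x-coordinate equals q²·(q⁴ − (d+1)·q² + d)·C(q, d+1), where C(q,d+1) is the binomial coefficient. -/

import Mathlib

open Finset Matrix Polynomial

section HermitianAux

variable {K : Type*} [Field K] [Fintype K] [DecidableEq K]

lemma vand_count_aux (k n : ℕ) (hk' : k ≤ n)
    (v : Fin n → K) (M : Matrix (Fin n) (Fin n) K)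
    (hM : ∀ s i, M s i = v i ^ (s : ℕ)) (hdet : IsUnit M.det) :
    (univ.filter (fun w : Fin n → K => ∀ s < k, ∑ i, w i * v i ^ s = 0)).card
      = Fintype.card K ^ (n - k) := by
  classical
  have hmv : ∀ (w : Fin n → K) (s : Fin n), (M.mulVec w) s = ∑ i, w i * v i ^ (s : ℕ) := by
    intro w s
    simp only [Matrix.mulVec, dotProduct, hM]
    exact Finset.sum_congr rfl fun i _ => mul_comm _ _
  -- step 2
  have step2 : (univ.filter (fun w : Fin n → K => ∀ s < k, ∑ i, w i * v i ^ s = 0)).card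
      = (univ.filter (fun u : Fin n → K => ∀ s : Fin n, (s : ℕ) < k → u s = 0)).card := by
    refine Finset.card_bij' (fun w _ => M.mulVec w) (fun u _ => M⁻¹.mulVec u) ?_ ?_ ?_ ?_
    · intro w hw
      simp only [mem_filter, mem_univ, true_and] at hw ⊢
      intro s hs
      rw [hmv]
      exact hw s hs
    · intro u hu
      simp only [mem_filter, mem_univ, true_and] at hu ⊢
      intro s hs
      have : (M.mulVec (M⁻¹.mulVec u)) = u := by
        rw [Matrix.mulVec_mulVec, Matrix.mul_nonsing_inv _ hdet, Matrix.one_mulVec]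
      have hfin : s < n := lt_of_lt_of_le hs hk'
      have := congrFun this ⟨s, hfin⟩
      rw [hmv] at this
      simpa using this ▸ (hu ⟨s, hfin⟩ hs)
    · intro w _
      show M⁻¹.mulVec (M.mulVec w) = w
      rw [Matrix.mulVec_mulVec, Matrix.nonsing_inv_mul _ hdet, Matrix.one_mulVec]
    · intro u _
      show M.mulVec (M⁻¹.mulVec u) = u
      rw [Matrix.mulVec_mulVec, Matrix.mul_nonsing_inv _ hdet, Matrix.one_mulVec]
  rw [step2]
  -- step 3
  have step3 : (univ.filter (fun u : Fin n → K => ∀ s : Fin n, (s : ℕ) < k → u s = 0))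
      = Fintype.piFinset (fun s : Fin n => if (s : ℕ) < k then ({0} : Finset K) else univ) := by
    ext u
    simp only [mem_filter, mem_univ, true_and, Fintype.mem_piFinset]
    constructor
    · intro h s
      by_cases hs : (s : ℕ) < k
      · simp [hs, h s hs]
      · simp [hs]
    · intro h s hs
      have := h s
      simpa [hs] using this
  rw [step3, Fintype.card_piFinset]
  have hcardfilt : (univ.filter fun s : Fin n => (s : ℕ) < k).card = k := by
    have h1 : ((univ.filter fun s : Fin n => (s : ℕ) < k).image Fin.val) = Finset.range k := by
      ext m
      simp only [Finset.mem_image, mem_filter, mem_univ, true_and, Finset.mem_range]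
      constructor
      · rintro ⟨s, hs, rfl⟩; exact hs
      · intro hm; exact ⟨⟨m, lt_of_lt_of_le hm hk'⟩, hm, rfl⟩
    have h2 := Finset.card_image_of_injective
      (univ.filter fun s : Fin n => (s : ℕ) < k) (Fin.val_injective)
    rw [h1, Finset.card_range] at h2
    exact h2.symm
  calc ∏ s : Fin n, ((if (s : ℕ) < k then ({0} : Finset K) else univ)).card
      = ∏ s : Fin n, (if (s : ℕ) < k then 1 else Fintype.card K) := by
        apply Finset.prod_congr rfl
        intro s _
        by_cases hs : (s : ℕ) < k <;> simp [hs]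
    _ = Fintype.card K ^ (n - k) := by
        rw [← Finset.prod_filter_mul_prod_filter_not univ (fun s : Fin n => (s : ℕ) < k)]
        rw [Finset.prod_congr rfl (fun s hs => if_pos (Finset.mem_filter.1 hs).2),
          Finset.prod_congr rfl (fun s hs => if_neg (Finset.mem_filter.1 hs).2)]
        rw [Finset.prod_const_one, Finset.prod_const, one_mul]
        congr 1
        rw [Finset.filter_not, Finset.card_sdiff_of_subset (Finset.filter_subset _ _), hcardfilt,
          Finset.card_univ, Fintype.card_fin]

lemma vand_count (S : Finset K) (k : ℕ) (hk : k ≤ S.card) :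
    (univ.filter (fun c : K → K => (∀ y, y ∉ S → c y = 0) ∧
      ∀ s < k, ∑ y ∈ S, c y * y ^ s = 0)).card = Fintype.card K ^ (S.card - k) := by
  classical
  set n := S.card with hn
  set e : Fin n ≃ ↥S := S.equivFin.symm with he
  set v : Fin n → K := fun i => (e i : K) with hv
  have hvinj : Function.Injective v := by
    intro a b hab
    exact e.injective (Subtype.ext hab)
  set M : Matrix (Fin n) (Fin n) K := (Matrix.vandermonde v).transpose with hM
  have hdet : IsUnit M.det := by
    rw [hM, Matrix.det_transpose, Matrix.det_vandermonde, isUnit_iff_ne_zero]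
    apply Finset.prod_ne_zero_iff.2
    intro i _
    apply Finset.prod_ne_zero_iff.2
    intro j hj
    exact sub_ne_zero.2 fun h => (Finset.mem_Ioi.1 hj).ne' (hvinj h)
  -- step 1: transfer to Fin n → K
  have step1 : (univ.filter (fun c : K → K => (∀ y, y ∉ S → c y = 0) ∧
      ∀ s < k, ∑ y ∈ S, c y * y ^ s = 0)).card
      = (univ.filter (fun w : Fin n → K => ∀ s < k, ∑ i, w i * v i ^ s = 0)).card := by
    refine Finset.card_bij' (fun c _ => fun i => c (v i))
      (fun w _ => fun y => if hy : y ∈ S then w (e.symm ⟨y, hy⟩) else 0) ?_ ?_ ?_ ?_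
    · intro c hc
      simp only [mem_filter, mem_univ, true_and] at hc ⊢
      intro s hs
      have h2 := hc.2 s hs
      calc ∑ i, c (v i) * v i ^ s = ∑ y : ↥S, c (y : K) * (y : K) ^ s :=
            Equiv.sum_comp e (fun y : ↥S => c (y : K) * (y : K) ^ s)
        _ = ∑ y ∈ S, c y * y ^ s := Finset.sum_coe_sort S (fun y => c y * y ^ s)
        _ = 0 := h2
    · intro w hw
      simp only [mem_filter, mem_univ, true_and] at hw ⊢
      constructor
      · intro y hy; simp [hy]
      · intro s hs
        have hsum : ∑ y ∈ S, (if hy : y ∈ S then w (e.symm ⟨y, hy⟩) else 0) * y ^ s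
            = ∑ i, w i * v i ^ s := by
          rw [← Finset.sum_coe_sort S, ← Equiv.sum_comp e]
          apply Finset.sum_congr rfl
          intro i _
          simp [hv]
        rw [hsum]
        exact hw s hs
    · intro c hc
      simp only [mem_filter, mem_univ, true_and] at hc
      funext y
      by_cases hy : y ∈ S
      · simp only [hy, dif_pos]
        congr 1
        simp [hv]
      · simp [hy, hc.1 y hy]
    · intro w _
      funext i
      have hmem : (v i) ∈ S := (e i).2
      simp only [hmem, dif_pos]
      congr 1
      apply e.injective
      simp [hv, Subtype.ext_iff]
  rw [step1]
  exact vand_count_aux k n hk v M (fun s i => rfl) hdet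

lemma core_count (S : Finset K) (d : ℕ) (hd : 2 ≤ d) (hS : S.card = d + 1) :
    (univ.filter (fun c : K → K => (∀ y, c y ≠ 0 ↔ y ∈ S) ∧
      ∀ s < d - 1, ∑ y ∈ S, c y * y ^ s = 0)).card
    = Fintype.card K ^ 2 - (d + 1) * Fintype.card K + d := by
  classical
  set Q := Fintype.card K with hQ
  have hdQ : d + 1 ≤ Q := by
    rw [← hS]; exact Finset.card_le_univ S
  set V : Finset (K → K) := univ.filter (fun c : K → K => (∀ y, y ∉ S → c y = 0) ∧
      ∀ s < d - 1, ∑ y ∈ S, c y * y ^ s = 0) with hV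
  have hVcard : V.card = Q ^ 2 := by
    have hk1 : d - 1 ≤ S.card := by omega
    have h2 : d + 1 - (d - 1) = 2 := by omega
    have := vand_count S (d - 1) hk1
    rw [hS, h2] at this
    exact this
  have hzero : (0 : K → K) ∈ V := by
    simp only [hV, mem_filter, mem_univ, true_and]
    exact ⟨fun y _ => rfl, fun s _ => by simp⟩
  -- single-vanishing count
  have hB : ∀ y0 ∈ S, (V.filter fun c => c y0 = 0).card = Q := by
    intro y0 hy0
    have hEq : (V.filter fun c => c y0 = 0)
        = univ.filter (fun c : K → K => (∀ y, y ∉ S.erase y0 → c y = 0) ∧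
          ∀ s < d - 1, ∑ y ∈ S.erase y0, c y * y ^ s = 0) := by
      ext c
      simp only [hV, mem_filter, mem_univ, true_and]
      constructor
      · rintro ⟨⟨hsupp, hsum⟩, hc0⟩
        refine ⟨?_, ?_⟩
        · intro y hy
          by_cases h : y = y0
          · subst h; exact hc0
          · exact hsupp y (fun hyS => hy (Finset.mem_erase.2 ⟨h, hyS⟩))
        · intro s hs
          rw [Finset.sum_erase _ (by rw [hc0, zero_mul])]
          exact hsum s hs
      · rintro ⟨hsupp, hsum⟩
        have hc0 : c y0 = 0 := hsupp y0 (Finset.notMem_erase y0 S)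
        refine ⟨⟨?_, ?_⟩, hc0⟩
        · intro y hy
          exact hsupp y (fun h => hy (Finset.mem_of_mem_erase h))
        · intro s hs
          rw [← Finset.sum_erase _ (by rw [hc0, zero_mul])]
          exact hsum s hs
    rw [hEq]
    have hcard : (S.erase y0).card = d := by
      rw [Finset.card_erase_of_mem hy0, hS]
      omega
    have hk2 : d - 1 ≤ (S.erase y0).card := by omega
    have h1 : d - (d - 1) = 1 := by omega
    have := vand_count (S.erase y0) (d - 1) hk2
    rw [hcard, h1, pow_one] at this
    exact this
  -- double-vanishing: only zero
  have hpair : ∀ c ∈ V, ∀ y0 ∈ S, ∀ y1 ∈ S, y0 ≠ y1 → c y0 = 0 → c y1 = 0 → c = 0 := by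
    intro c hc y0 hy0 y1 hy1 hne hc0 hc1
    set S2 := (S.erase y0).erase y1 with hS2
    have hS2card : S2.card = d - 1 := by
      rw [hS2, Finset.card_erase_of_mem (Finset.mem_erase.2 ⟨hne.symm, hy1⟩),
        Finset.card_erase_of_mem hy0, hS]
      omega
    have hk3 : d - 1 ≤ S2.card := by omega
    have key := vand_count S2 (d - 1) hk3
    rw [hS2card, Nat.sub_self, pow_zero] at key
    set W := univ.filter (fun c : K → K => (∀ y, y ∉ S2 → c y = 0) ∧
      ∀ s < d - 1, ∑ y ∈ S2, c y * y ^ s = 0) with hW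
    have hcW : c ∈ W := by
      simp only [hW, mem_filter, mem_univ, true_and]
      simp only [hV, mem_filter, mem_univ, true_and] at hc
      constructor
      · intro y hy
        by_cases h0 : y = y0
        · subst h0; exact hc0
        by_cases h1 : y = y1
        · subst h1; exact hc1
        · exact hc.1 y (fun hyS => hy (by simp [hS2, Finset.mem_erase, h0, h1, hyS]))
      · intro s hs
        have e1 : ∑ y ∈ S2, c y * y ^ s = ∑ y ∈ S, c y * y ^ s := by
          rw [hS2, Finset.sum_erase _ (by rw [hc1, zero_mul]),
            Finset.sum_erase _ (by rw [hc0, zero_mul])]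
        rw [e1]
        exact hc.2 s hs
    have h0W : (0 : K → K) ∈ W := by
      simp only [hW, mem_filter, mem_univ, true_and]
      exact ⟨fun y _ => rfl, fun s _ => by simp⟩
    have := Finset.card_le_one.1 (le_of_eq key) c hcW 0 h0W
    exact this
  set U : Finset (K → K) := S.biUnion (fun y => V.filter fun c => c y = 0) with hU
  have hTU : univ.filter (fun c : K → K => (∀ y, c y ≠ 0 ↔ y ∈ S) ∧
      ∀ s < d - 1, ∑ y ∈ S, c y * y ^ s = 0) = V \ U := by
    ext c
    constructor
    · intro hc
      rw [mem_filter] at hc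
      obtain ⟨-, hiff, hsum⟩ := hc
      have hcV : c ∈ V := by
        rw [hV, mem_filter]
        exact ⟨mem_univ _, fun y hy => by_contra (fun h => hy ((hiff y).1 h)), hsum⟩
      rw [Finset.mem_sdiff]
      refine ⟨hcV, ?_⟩
      rw [hU, Finset.mem_biUnion]
      rintro ⟨y, hyS, hyf⟩
      rw [mem_filter] at hyf
      exact (hiff y).2 hyS hyf.2
    · intro hc
      rw [Finset.mem_sdiff] at hc
      obtain ⟨hcV, hcU⟩ := hc
      have hcV' := hcV
      rw [hV, mem_filter] at hcV'
      rw [mem_filter]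
      refine ⟨mem_univ _, fun y => ⟨fun h => ?_, fun hyS h0 => ?_⟩, hcV'.2.2⟩
      · by_contra hy
        exact h (hcV'.2.1 y hy)
      · apply hcU
        rw [hU, Finset.mem_biUnion]
        exact ⟨y, hyS, by rw [mem_filter]; exact ⟨hcV, h0⟩⟩
  have hUsub : U ⊆ V := by
    rw [hU]
    exact Finset.biUnion_subset.2 (fun y _ => Finset.filter_subset _ _)
  have hSne : S.Nonempty := by
    rw [← Finset.card_pos, hS]; omega
  have hUcard : U.card = 1 + (d + 1) * (Q - 1) := by
    have hins : U = insert (0 : K → K)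
        (S.biUnion fun y => (V.filter fun c => c y = 0).erase 0) := by
      ext c
      rw [hU, Finset.mem_insert, Finset.mem_biUnion, Finset.mem_biUnion]
      constructor
      · rintro ⟨y, hyS, hyf⟩
        by_cases h0 : c = 0
        · exact Or.inl h0
        · exact Or.inr ⟨y, hyS, Finset.mem_erase.2 ⟨h0, hyf⟩⟩
      · rintro (rfl | ⟨y, hyS, hyf⟩)
        · obtain ⟨y, hyS⟩ := hSne
          exact ⟨y, hyS, by rw [mem_filter]; exact ⟨hzero, rfl⟩⟩
        · exact ⟨y, hyS, Finset.mem_of_mem_erase hyf⟩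
    have h0nm : (0 : K → K) ∉ S.biUnion fun y => (V.filter fun c => c y = 0).erase 0 := by
      rw [Finset.mem_biUnion]
      rintro ⟨y, -, hyf⟩
      exact (Finset.mem_erase.1 hyf).1 rfl
    rw [hins, Finset.card_insert_of_notMem h0nm]
    have hdisj : ∀ y0 ∈ S, ∀ y1 ∈ S, y0 ≠ y1 →
        Disjoint ((V.filter fun c => c y0 = 0).erase 0)
          ((V.filter fun c => c y1 = 0).erase 0) := by
      intro y0 hy0 y1 hy1 hne
      rw [Finset.disjoint_left]
      intro c hc0 hc1
      rw [Finset.mem_erase, mem_filter] at hc0 hc1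
      exact hc0.1 (hpair c hc0.2.1 y0 hy0 y1 hy1 hne hc0.2.2 hc1.2.2)
    rw [Finset.card_biUnion hdisj]
    have : ∀ y ∈ S, ((V.filter fun c => c y = 0).erase 0).card = Q - 1 := by
      intro y hy
      rw [Finset.card_erase_of_mem (by rw [mem_filter]; exact ⟨hzero, rfl⟩), hB y hy]
    rw [Finset.sum_congr rfl this, Finset.sum_const, hS, smul_eq_mul]
    exact Nat.add_comm _ _
  rw [hTU, Finset.card_sdiff_of_subset hUsub, hVcard, hUcard]
  have e1 : (d + 1) * (Q - 1) + (d + 1) = (d + 1) * Q := by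
    have hQ1 : Q - 1 + 1 = Q := Nat.succ_pred_eq_of_pos (Nat.lt_of_lt_of_le (Nat.succ_pos d) hdQ)
    calc (d+1)*(Q-1) + (d+1) = (d+1) * ((Q-1)+1) := by ring
      _ = (d+1) * Q := by rw [hQ1]
  have e2 : (d + 1) * Q ≤ Q ^ 2 := by
    rw [pow_two]
    exact Nat.mul_le_mul_right Q hdQ
  clear hTU hUcard hVcard hB hpair hzero hUsub hU hV hSne hS
  clear_value U V
  clear U V
  rw [hQ] at e1 e2 hdQ ⊢
  generalize hA : Fintype.card K ^ 2 = A at e2 ⊢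
  generalize hB2 : (d + 1) * Fintype.card K = B at e1 e2 ⊢
  generalize hP : (d + 1) * (Fintype.card K - 1) = P at e1 ⊢
  omega

lemma fiber_card (q : ℕ) (hq : IsPrimePow q)
    {F : Type*} [Field F] [Fintype F] [DecidableEq F] (hF : Fintype.card F = q ^ 2) (t : F) :
    (univ.filter fun y : F => t ^ (q + 1) = y ^ q + y).card = q := by
  classical
  obtain ⟨p, kk, hp, hkpos, hqpk⟩ := hq
  haveI hpfact : Fact p.Prime := ⟨hp.nat_prime⟩
  have hq2 : 2 ≤ q := by
    rw [← hqpk]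
    exact Nat.one_lt_pow (by omega) hp.nat_prime.two_le
  -- characteristic
  have hchar : CharP F p := by
    have h1 : (ringChar F).Prime := CharP.char_is_prime F (ringChar F)
    obtain ⟨n, -, hn⟩ := FiniteField.card F (ringChar F)
    have hdvd : ringChar F ∣ p ^ (2 * kk) := by
      rw [(by rw [← hqpk, ← pow_mul, mul_comm] : p ^ (2 * kk) = q ^ 2), ← hF, hn]
      exact dvd_pow_self _ (by positivity)
    have := (Nat.prime_dvd_prime_iff_eq h1 hp.nat_prime).1
      (h1.dvd_of_dvd_pow hdvd)
    rw [← this]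
    exact ringChar.charP F
  haveI := hchar
  have hfrob : ∀ a b : F, (a + b) ^ q = a ^ q + b ^ q := by
    intro a b; rw [← hqpk]; exact add_pow_char_pow a b p kk
  have hfrobs : ∀ a b : F, (a - b) ^ q = a ^ q - b ^ q := by
    intro a b; rw [← hqpk]; exact sub_pow_char_pow a b kk
  set φ : F → F := fun y => y ^ q + y with hphi
  have hadd : ∀ a b : F, φ (a - b) = φ a - φ b := by
    intro a b
    simp only [hphi, hfrobs]
    ring
  -- root bounds
  have hroot : ∀ e : F, (univ.filter fun y : F => y ^ q + e * y = 0).card ≤ q := by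
    intro e
    set f : F[X] := X ^ q + (C e) * X with hf
    have hq1 : (1 : ℕ) ≠ q := Nat.ne_of_lt hq2
    have hfne : f ≠ 0 := by
      intro h
      have h0 : f.coeff q = 0 := by rw [h]; simp
      rw [hf, coeff_add, coeff_X_pow, if_pos rfl, coeff_C_mul, coeff_X,
        if_neg hq1, mul_zero, add_zero] at h0
      exact one_ne_zero h0
    have hdeg : f.natDegree ≤ q := by
      apply le_trans (natDegree_add_le _ _)
      simp only [natDegree_X_pow, sup_le_iff, max_le_iff]
      refine ⟨le_refl q, le_trans (natDegree_C_mul_le _ _) (by simp; omega)⟩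
    have hsub : univ.filter (fun y : F => y ^ q + e * y = 0) ⊆ f.roots.toFinset := by
      intro y hy
      rw [mem_filter] at hy
      rw [Multiset.mem_toFinset, mem_roots hfne, hf]
      show eval y (X ^ q + C e * X) = 0
      simpa using hy.2
    calc (univ.filter fun y : F => y ^ q + e * y = 0).card
        ≤ f.roots.toFinset.card := Finset.card_le_card hsub
      _ ≤ Multiset.card f.roots := Multiset.toFinset_card_le _
      _ ≤ f.natDegree := f.card_roots'
      _ ≤ q := hdeg
  have hadd2 : ∀ a b : F, φ (a + b) = φ a + φ b := by
    intro a b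
    simp only [hphi, hfrob]
    ring
  have hker_le : (univ.filter fun y : F => φ y = 0).card ≤ q := by
    have h := hroot 1
    have he : (univ.filter fun y : F => y ^ q + 1 * y = 0)
        = (univ.filter fun y : F => φ y = 0) := by
      apply Finset.filter_congr
      intro y _
      rw [one_mul]
    rwa [he] at h
  set I := univ.image φ with hI
  have hfib : ∀ c ∈ I, (univ.filter fun y : F => φ y = c).card
      = (univ.filter fun y : F => φ y = 0).card := by
    intro c hc
    rw [hI, Finset.mem_image] at hc
    obtain ⟨y0, -, hy0⟩ := hc
    refine Finset.card_bij' (fun y _ => y - y0) (fun y _ => y + y0) ?_ ?_ ?_ ?_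
    · intro y hy
      rw [mem_filter] at hy ⊢
      refine ⟨mem_univ _, ?_⟩
      rw [hadd, hy.2, hy0, sub_self]
    · intro y hy
      rw [mem_filter] at hy ⊢
      refine ⟨mem_univ _, ?_⟩
      rw [hadd2, hy.2, hy0, zero_add]
    · intro y _
      simp
    · intro y _
      simp
  have hsum : Fintype.card F = ∑ c ∈ I, (univ.filter fun y : F => φ y = c).card := by
    rw [← Finset.card_univ]
    exact Finset.card_eq_sum_card_fiberwise
      (fun y _ => Finset.mem_image_of_mem φ (mem_univ y))
  rw [Finset.sum_congr rfl hfib, Finset.sum_const, smul_eq_mul] at hsum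
  set Fix := univ.filter fun c : F => c ^ q = c with hFixdef
  have hFix_le : Fix.card ≤ q := by
    have h := hroot (-1)
    have he : (univ.filter fun y : F => y ^ q + (-1) * y = 0) = Fix := by
      apply Finset.filter_congr
      intro y _
      rw [neg_one_mul, add_neg_eq_zero]
    rwa [he] at h
  have hIsub : I ⊆ Fix := by
    intro c hc
    rw [hI, Finset.mem_image] at hc
    obtain ⟨y, -, rfl⟩ := hc
    rw [hFixdef, mem_filter]
    refine ⟨mem_univ _, ?_⟩
    have hyy : (y ^ q) ^ q = y := by
      rw [← pow_mul, ← pow_two, ← hF]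
      exact FiniteField.pow_card y
    show (y ^ q + y) ^ q = y ^ q + y
    rw [hfrob, hyy, add_comm]
  have hI_le : I.card ≤ q := le_trans (Finset.card_le_card hIsub) hFix_le
  have hq0 : 0 < q := by omega
  have h1 : I.card * (univ.filter fun y : F => φ y = 0).card = q * q := by
    rw [← hsum, hF, pow_two]
  have hIcard : I.card = q := by
    by_contra hne
    have hlt : I.card < q := lt_of_le_of_ne hI_le hne
    have h3 : I.card * (univ.filter fun y : F => φ y = 0).card ≤ I.card * q :=
      Nat.mul_le_mul_left _ hker_le
    have h4 : I.card * q < q * q := Nat.mul_lt_mul_of_lt_of_le hlt (le_refl q) hq0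
    omega
  have hkcard : (univ.filter fun y : F => φ y = 0).card = q := by
    rw [hIcard] at h1
    exact Nat.eq_of_mul_eq_mul_left hq0 h1
  have hIFix : I = Fix := Finset.eq_of_subset_of_card_le hIsub (by rw [hIcard]; exact hFix_le)
  have ht : t ^ (q + 1) ∈ Fix := by
    rw [hFixdef, mem_filter]
    refine ⟨mem_univ _, ?_⟩
    rw [← pow_mul, (by ring : (q + 1) * q = q ^ 2 + q), pow_add, ← hF,
      FiniteField.pow_card, pow_succ, mul_comm]
  rw [← hIFix] at ht
  have he : (univ.filter fun y : F => t ^ (q + 1) = y ^ q + y)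
      = (univ.filter fun y : F => φ y = t ^ (q + 1)) := by
    apply Finset.filter_congr
    intro y _
    rw [hphi]
    exact eq_comm
  rw [he, hfib _ ht, hkcard]

end HermitianAux

/-- `z : F × F → F` is a codeword of the Hermitian code `H^j_d`: it vanishes outside the
Hermitian curve `x^(q+1) = y^q + y` and is orthogonal to the evaluations of the monomials
`x^r y^s` with `r + s ≤ d - 2` or `(r, s) = (d - 1 - i, i)` for some `0 ≤ i < j`. -/
def hermitianCodeword (q d j : ℕ) {F : Type*} [Field F] [Fintype F] [DecidableEq F]
    (z : F × F → F) : Prop :=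
  (∀ p : F × F, p.1 ^ (q + 1) ≠ p.2 ^ q + p.2 → z p = 0) ∧
  ∀ r s : ℕ, (r + s ≤ d - 2 ∨ ∃ i < j, r = d - 1 - i ∧ s = i) →
    ∑ p ∈ Finset.univ.filter (fun p : F × F => p.1 ^ (q + 1) = p.2 ^ q + p.2),
      z p * p.1 ^ r * p.2 ^ s = 0

/-- The weight of a codeword: the number of points where it does not vanish. -/
def hermitianWeight {F : Type*} [Field F] [Fintype F] [DecidableEq F]
    (z : F × F → F) : ℕ :=
  (Finset.univ.filter (fun p : F × F => z p ≠ 0)).card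

section HermitianMain
attribute [local instance] Classical.propDecidable

lemma line_count (q d j : ℕ) (hq : IsPrimePow q) (hd : 2 ≤ d) (hdq : d ≤ q)
    (hj : j ≤ d - 1)
    {F : Type*} [Field F] [Fintype F] [DecidableEq F] (hF : Fintype.card F = q ^ 2) (t : F) :
    (univ.filter fun z : F × F → F => hermitianCodeword q d j z ∧ hermitianWeight z = d + 1 ∧
      ∀ p : F × F, z p ≠ 0 → p.1 = t).card
    = (q ^ 4 - (d + 1) * q ^ 2 + d) * Nat.choose q (d + 1) := by
  classical
  set Yt : Finset F := univ.filter fun y : F => t ^ (q + 1) = y ^ q + y with hYt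
  have hYtcard : Yt.card = q := fiber_card q hq hF t
  -- Step I : bijection with coefficient functions
  have stepI : (univ.filter fun z : F × F → F => hermitianCodeword q d j z ∧
        hermitianWeight z = d + 1 ∧ ∀ p : F × F, z p ≠ 0 → p.1 = t).card
      = (univ.filter fun c : F → F =>
          (∀ y : F, c y ≠ 0 → t ^ (q + 1) = y ^ q + y) ∧
          (univ.filter fun y : F => c y ≠ 0).card = d + 1 ∧
          ∀ s < d - 1, ∑ y : F, c y * y ^ s = 0).card := by
    refine Finset.card_bij' (fun z _ => fun y => z (t, y))
      (fun c _ => fun p => if p.1 = t then c p.2 else 0) ?_ ?_ ?_ ?_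
    · -- forward membership
      intro z hz
      rw [mem_filter] at hz
      obtain ⟨-, ⟨hcw1, hcw2⟩, hw, hsupp⟩ := hz
      simp only [mem_filter, mem_univ, true_and]
      refine ⟨?_, ?_, ?_⟩
      · intro y hy
        by_contra hcurve
        exact hy (hcw1 (t, y) hcurve)
      · have hcardeq : (univ.filter fun y : F => z (t, y) ≠ 0).card
            = (univ.filter fun p : F × F => z p ≠ 0).card := by
          refine Finset.card_bij' (fun y _ => ((t, y) : F × F)) (fun p _ => p.2) ?_ ?_ ?_ ?_
          · intro y hy
            rw [mem_filter] at hy ⊢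
            exact ⟨mem_univ _, hy.2⟩
          · intro p hp
            rw [mem_filter] at hp ⊢
            refine ⟨mem_univ _, ?_⟩
            have hpt := hsupp p hp.2
            show z (t, p.2) ≠ 0
            have hpe : ((t, p.2) : F × F) = p := by
              rw [← hpt]
            rw [hpe]
            exact hp.2
          · intro y _
            rfl
          · intro p hp
            rw [mem_filter] at hp
            have hpt := hsupp p hp.2
            show ((t, p.2) : F × F) = p
            rw [← hpt]
        rw [hcardeq]
        exact hw
      · intro s hs
        have hcond : (0 : ℕ) + s ≤ d - 2 := by omega
        have hsum := hcw2 0 s (Or.inl hcond)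
        have e1 : ∑ p ∈ univ.filter (fun p : F × F => p.1 ^ (q+1) = p.2 ^ q + p.2),
            z p * p.1 ^ 0 * p.2 ^ s = ∑ p : F × F, z p * p.1 ^ 0 * p.2 ^ s := by
          apply Finset.sum_subset (Finset.filter_subset _ _)
          intro p _ hp
          rw [mem_filter] at hp
          push_neg at hp
          rw [hcw1 p (hp (mem_univ p)), zero_mul, zero_mul]
        rw [e1] at hsum
        rw [Fintype.sum_prod_type] at hsum
        rw [Fintype.sum_eq_single t ?_] at hsum
        · simpa using hsum
        · intro x hx
          apply Finset.sum_eq_zero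
          intro y _
          have : z (x, y) = 0 := by
            by_contra hzy
            exact hx (hsupp (x, y) hzy)
          rw [this, zero_mul, zero_mul]
    · -- backward membership
      intro c hc
      rw [mem_filter] at hc
      obtain ⟨-, hsupp, hw, hsum⟩ := hc
      have hjz : ∀ p : F × F, (if p.1 = t then c p.2 else 0) ≠ 0 → p.1 = t ∧ c p.2 ≠ 0 := by
        intro p hp
        by_cases h : p.1 = t
        · rw [if_pos h] at hp
          exact ⟨h, hp⟩
        · rw [if_neg h] at hp
          exact absurd rfl hp
      simp only [mem_filter, mem_univ, true_and]
      refine ⟨⟨?_, ?_⟩, ?_, ?_⟩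
      · intro p hcurve
        by_contra hp
        obtain ⟨hpt, hcp⟩ := hjz p hp
        apply hcp
        by_contra hcp2
        apply hcurve
        rw [hpt]
        exact hsupp p.2 hcp2
      · intro r s hrs
        have hs : s < d - 1 := by
          rcases hrs with h | ⟨i, hi, -, rfl⟩
          · omega
          · omega
        have e1 : ∑ p ∈ univ.filter (fun p : F × F => p.1 ^ (q+1) = p.2 ^ q + p.2),
            (if p.1 = t then c p.2 else 0) * p.1 ^ r * p.2 ^ s
            = ∑ p : F × F, (if p.1 = t then c p.2 else 0) * p.1 ^ r * p.2 ^ s := by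
          apply Finset.sum_subset (Finset.filter_subset _ _)
          intro p _ hp
          rw [mem_filter] at hp
          push_neg at hp
          have hpc := hp (mem_univ p)
          have : (if p.1 = t then c p.2 else 0) = 0 := by
            by_cases h : p.1 = t
            · rw [if_pos h]
              by_contra hc2
              apply hpc
              rw [h]
              exact hsupp p.2 hc2
            · rw [if_neg h]
          rw [this, zero_mul, zero_mul]
        rw [e1, Fintype.sum_prod_type]
        rw [Fintype.sum_eq_single t ?_]
        · have : ∑ y : F, (if t = t then c y else 0) * t ^ r * y ^ s
              = t ^ r * ∑ y : F, c y * y ^ s := by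
            rw [Finset.mul_sum]
            apply Finset.sum_congr rfl
            intro y _
            rw [if_pos rfl]
            ring
          rw [this, hsum s hs, mul_zero]
        · intro x hx
          apply Finset.sum_eq_zero
          intro y _
          rw [if_neg hx, zero_mul, zero_mul]
      · have hcardeq : (univ.filter fun p : F × F => (if p.1 = t then c p.2 else 0) ≠ 0).card
            = (univ.filter fun y : F => c y ≠ 0).card := by
          refine Finset.card_bij' (fun p _ => p.2) (fun y _ => ((t, y) : F × F)) ?_ ?_ ?_ ?_
          · intro p hp
            rw [mem_filter] at hp ⊢
            exact ⟨mem_univ _, (hjz p hp.2).2⟩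
          · intro y hy
            rw [mem_filter] at hy ⊢
            refine ⟨mem_univ _, ?_⟩
            show (if ((t, y) : F × F).1 = t then c ((t, y) : F × F).2 else 0) ≠ 0
            simpa using hy.2
          · intro p hp
            rw [mem_filter] at hp
            show ((t, p.2) : F × F) = p
            rw [← (hjz p hp.2).1]
          · intro y _
            rfl
        show (univ.filter fun p : F × F => (if p.1 = t then c p.2 else 0) ≠ 0).card = d + 1
        rw [hcardeq]
        exact hw
      · intro p hp
        exact (hjz p hp).1
    · -- left inverse
      intro z hz
      rw [mem_filter] at hz
      funext p
      by_cases h : p.1 = t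
      · simp only [if_pos h]
        congr 1
        rw [← h]
      · simp only [if_neg h]
        by_contra hzp
        exact h (hz.2.2.2 p fun h0 => hzp h0.symm)
    · -- right inverse
      intro c _
      funext y
      simp
  rw [stepI]
  -- Step II : fiber over supports
  have stepII : (univ.filter fun c : F → F =>
        (∀ y : F, c y ≠ 0 → t ^ (q + 1) = y ^ q + y) ∧
        (univ.filter fun y : F => c y ≠ 0).card = d + 1 ∧
        ∀ s < d - 1, ∑ y : F, c y * y ^ s = 0).card
      = ∑ S ∈ Finset.powersetCard (d + 1) Yt,
          (univ.filter fun c : F → F => (∀ y, c y ≠ 0 ↔ y ∈ S) ∧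
            ∀ s < d - 1, ∑ y ∈ S, c y * y ^ s = 0).card := by
    rw [Finset.card_eq_sum_card_fiberwise
      (f := fun c : F → F => univ.filter fun y : F => c y ≠ 0)
      (t := Finset.powersetCard (d + 1) Yt) ?_]
    · apply Finset.sum_congr rfl
      intro S hS
      congr 1
      rw [Finset.mem_powersetCard] at hS
      ext c
      rw [mem_filter, mem_filter, mem_filter]
      constructor
      · rintro ⟨⟨-, hsupp, hw, hsum⟩, hfS⟩
        refine ⟨mem_univ _, ?_, ?_⟩
        · intro y
          rw [← hfS, mem_filter]
          constructor
          · intro h; exact ⟨mem_univ _, h⟩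
          · intro h; exact h.2
        · intro s hs
          have := hsum s hs
          rw [← this]
          apply Finset.sum_subset (Finset.subset_univ S)
          intro y _ hy
          have : c y = 0 := by
            by_contra h
            apply hy
            rw [← hfS, mem_filter]
            exact ⟨mem_univ _, h⟩
          rw [this, zero_mul]
      · rintro ⟨-, hiff, hsum⟩
        have hfS : (univ.filter fun y : F => c y ≠ 0) = S := by
          ext y
          rw [mem_filter]
          constructor
          · intro h; exact (hiff y).1 h.2
          · intro h; exact ⟨mem_univ _, (hiff y).2 h⟩
        refine ⟨⟨mem_univ _, ?_, ?_, ?_⟩, hfS⟩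
        · intro y hy
          have hyS : y ∈ S := (hiff y).1 hy
          have := hS.1 hyS
          rw [hYt, mem_filter] at this
          exact this.2
        · rw [hfS]; exact hS.2
        · intro s hs
          rw [← hsum s hs]
          symm
          apply Finset.sum_subset (Finset.subset_univ S)
          intro y _ hy
          have : c y = 0 := by
            by_contra h
            exact hy ((hiff y).1 h)
          rw [this, zero_mul]
    · intro c hc
      rw [Finset.mem_coe, mem_filter] at hc
      simp only [Finset.mem_coe, Finset.mem_powersetCard]
      constructor
      · intro y hy
        rw [mem_filter] at hy
        rw [hYt, mem_filter]
        exact ⟨mem_univ _, hc.2.1 y hy.2⟩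
      · exact hc.2.2.1
  rw [stepII]
  have hM : ∀ S ∈ Finset.powersetCard (d + 1) Yt,
      (univ.filter fun c : F → F => (∀ y, c y ≠ 0 ↔ y ∈ S) ∧
        ∀ s < d - 1, ∑ y ∈ S, c y * y ^ s = 0).card = q ^ 4 - (d + 1) * q ^ 2 + d := by
    intro S hS
    rw [Finset.mem_powersetCard] at hS
    rw [core_count S d hd hS.2, hF]
    congr 2
    rw [← pow_mul]
  rw [Finset.sum_congr rfl hM, Finset.sum_const, Finset.card_powersetCard, hYtcard, smul_eq_mul,
    Nat.mul_comm]

theorem stmt_17 (q d j : ℕ) (hq : IsPrimePow q) (hd : 2 ≤ d) (hdq : d ≤ q)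
    (hj : j ≤ d - 1)
    (F : Type*) [Field F] [Fintype F] [DecidableEq F] (hF : Fintype.card F = q ^ 2) :
    Nat.card {z : F × F → F // hermitianCodeword q d j z ∧ hermitianWeight z = d + 1 ∧
        ∃ t : F, ∀ p : F × F, z p ≠ 0 → p.1 = t}
      = q ^ 2 * (q ^ 4 - (d + 1) * q ^ 2 + d) * Nat.choose q (d + 1) := by
  classical
  rw [Nat.card_eq_fintype_card, Fintype.card_subtype]
  set A : Finset (F × F → F) := univ.filter fun z : F × F → F =>
    hermitianCodeword q d j z ∧ hermitianWeight z = d + 1 ∧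
      ∃ t : F, ∀ p : F × F, z p ≠ 0 → p.1 = t with hA
  -- the x-coordinate picking function
  set τ : (F × F → F) → F := fun z =>
    if h : ∃ p : F × F, z p ≠ 0 then (Classical.choose h).1 else 0 with hτ
  have hτspec : ∀ z ∈ A, ∀ p : F × F, z p ≠ 0 → p.1 = τ z := by
    intro z hz p hp
    rw [hA, mem_filter] at hz
    obtain ⟨-, -, hw, t, ht⟩ := hz
    have hex : ∃ p : F × F, z p ≠ 0 := ⟨p, hp⟩
    rw [hτ]
    simp only [dif_pos hex]
    rw [ht p hp, ht (Classical.choose hex) (Classical.choose_spec hex)]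
  have hpart := Finset.card_eq_sum_card_fiberwise
    (f := τ) (s := A) (t := univ) (fun z _ => mem_univ (τ z))
  rw [hpart]
  have hfib : ∀ t : F, (A.filter fun z => τ z = t)
      = univ.filter (fun z : F × F → F => hermitianCodeword q d j z ∧
          hermitianWeight z = d + 1 ∧ ∀ p : F × F, z p ≠ 0 → p.1 = t) := by
    intro t
    ext z
    simp only [mem_filter, mem_univ, true_and]
    constructor
    · rintro ⟨hzA, hτz⟩
      have hzA' := hzA
      rw [hA, mem_filter] at hzA'
      obtain ⟨-, hcw, hw, -⟩ := hzA'
      refine ⟨hcw, hw, ?_⟩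
      intro p hp
      rw [hτspec z hzA p hp, hτz]
    · rintro ⟨hcw, hw, ht⟩
      have hzA : z ∈ A := by
        rw [hA, mem_filter]
        exact ⟨mem_univ _, hcw, hw, t, ht⟩
      refine ⟨hzA, ?_⟩
      have hex : ∃ p : F × F, z p ≠ 0 := by
        by_contra hno
        push_neg at hno
        have : hermitianWeight z = 0 := by
          rw [hermitianWeight]
          rw [Finset.card_eq_zero]
          ext p
          simp [hno p]
        omega
      rw [hτ]
      simp only [dif_pos hex]
      exact ht (Classical.choose hex) (Classical.choose_spec hex)
  have hsum : ∀ t ∈ (univ : Finset F), (A.filter fun z => τ z = t).card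
      = (q ^ 4 - (d + 1) * q ^ 2 + d) * Nat.choose q (d + 1) := by
    intro t _
    rw [hfib t]
    exact line_count q d j hq hd hdq hj hF t
  rw [Finset.sum_congr rfl hsum, Finset.sum_const, Finset.card_univ, hF, smul_eq_mul, mul_assoc]

end HermitianMain
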